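/- Let W : [0,T] → (0,1] be continuous, V : [0,T] → [0,∞) integrable, and C > 0, and suppose W(t) ≤ W(0) + C ∫_0^t V(τ) ln(e + V(τ)) · W(τ)(1 - ln W(τ)) dτ for all t ∈ [0,T], with 0 < W(0) ≤ 1. Then W(t)/e ≤ (W(0)/e)^{exp(-C ∫_0^t V(τ) ln(e+V(τ)) dτ)} for all t ∈ [0,T]. -/

import Mathlib

open MeasureTheory Real Set


lemma mu_mono {x y : ℝ} (hx : 0 < x) (hxy : x ≤ y) (hy : y ≤ 1) :
    x * (1 - Real.log x) ≤ y * (1 - Real.log y) := by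
  have hx1 : x ≤ 1 := hxy.trans hy
  have hder : ∀ z : ℝ, 0 < z →
      HasDerivAt (fun z : ℝ => z * (1 - Real.log z)) (-Real.log z) z := by
    intro z hz
    have h1 : HasDerivAt (fun z : ℝ => z) 1 z := hasDerivAt_id z
    have h2 : HasDerivAt (fun z : ℝ => 1 - Real.log z) (-(1/z)) z := by
      simpa using ((Real.hasDerivAt_log (ne_of_gt hz)).const_sub 1)
    have h3 := h1.mul h2
    refine h3.congr_deriv ?_
    field_simp
    ring
  have hmono : MonotoneOn (fun z : ℝ => z * (1 - Real.log z)) (Set.Icc x 1) := by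
    apply monotoneOn_of_deriv_nonneg (convex_Icc x 1)
    · apply ContinuousOn.mul continuousOn_id
      apply ContinuousOn.sub continuousOn_const
      apply Real.continuousOn_log.mono
      intro z hz
      simp only [Set.mem_compl_iff, Set.mem_singleton_iff]
      exact ne_of_gt (lt_of_lt_of_le hx hz.1)
    · intro z hz
      rw [interior_Icc] at hz
      exact ((hder z (hx.trans hz.1)).differentiableAt).differentiableWithinAt
    · intro z hz
      rw [interior_Icc] at hz
      rw [(hder z (hx.trans hz.1)).deriv]
      simpa using Real.log_nonpos (by linarith [hx.trans hz.1]) hz.2.le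
  exact hmono ⟨le_refl x, hx1⟩ ⟨hxy, hy⟩ hxy

lemma mu_le_one {x : ℝ} (hx : 0 < x) (h1 : x ≤ 1) : x * (1 - Real.log x) ≤ 1 := by
  simpa using mu_mono hx h1 le_rfl



lemma key_bound (g : ℝ → ℝ) (s : ℝ) (hs : 0 ≤ s)
    (hg : Integrable g) (hgnn : ∀ u, 0 ≤ g u)
    (h h' h'' : ℝ → ℝ)
    (hd1 : ∀ x, HasDerivAt h (h' x) x)
    (hd2 : ∀ x, HasDerivAt h' (h'' x) x)
    (hc2 : Continuous h'')
    (hnn : ∀ x, 0 ≤ x → x ≤ (∫ u in (0:ℝ)..s, g u) → 0 ≤ h'' x) :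
    ∫ u in (0:ℝ)..s, g u * h' (∫ τ in (0:ℝ)..u, g τ)
      ≤ h (∫ u in (0:ℝ)..s, g u) - h 0 := by
  set G : ℝ → ℝ := fun u => ∫ τ in (0:ℝ)..u, g τ with hGdef
  have hGcont : Continuous G :=
    intervalIntegral.continuous_primitive (fun a b => hg.intervalIntegrable) 0
  have hGmono : Monotone G := by
    intro u v huv
    have hadd := intervalIntegral.integral_add_adjacent_intervals
      (hg.intervalIntegrable (a := 0) (b := u)) (hg.intervalIntegrable (a := u) (b := v))
    have hnn2 : 0 ≤ ∫ τ in u..v, g τ :=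
      intervalIntegral.integral_nonneg huv (fun x _ => hgnn x)
    simp only [hGdef]
    linarith [hadd]
  have hG0 : G 0 = 0 := intervalIntegral.integral_same
  set B : ℝ := G s with hBdef
  have hB0 : 0 ≤ B := by
    have := hGmono hs; rw [hG0] at this; exact this
  have hGnn : ∀ u, 0 ≤ u → 0 ≤ G u := by
    intro u hu; have := hGmono hu; rw [hG0] at this; exact this
  have hGleB : ∀ u, u ≤ s → G u ≤ B := fun u hu => hGmono hu
  -- bound for h'' on [0, B]
  obtain ⟨M, hM⟩ := (isCompact_Icc (a := (0:ℝ)) (b := B)).exists_bound_of_continuousOn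
    hc2.continuousOn
  -- the product function
  set F : ℝ × ℝ → ℝ :=
    fun p => (g p.1 * h'' p.2) * Set.indicator {q : ℝ × ℝ | q.2 ≤ G q.1} 1 p with hFdef
  have hsetm : MeasurableSet {q : ℝ × ℝ | q.2 ≤ G q.1} :=
    (isClosed_le continuous_snd (hGcont.comp continuous_fst)).measurableSet
  have hF_aesm : AEStronglyMeasurable F
      ((volume.restrict (Ioc 0 s)).prod (volume.restrict (Ioc 0 B))) := by
    have h1 : AEStronglyMeasurable (fun p : ℝ × ℝ => g p.1)
        ((volume.restrict (Ioc 0 s)).prod (volume.restrict (Ioc 0 B))) :=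
      hg.aestronglyMeasurable.restrict.comp_fst
    have h2 : AEStronglyMeasurable (fun p : ℝ × ℝ => h'' p.2)
        ((volume.restrict (Ioc 0 s)).prod (volume.restrict (Ioc 0 B))) :=
      hc2.aestronglyMeasurable.restrict.comp_snd
    exact (h1.mul h2).mul (measurable_const.indicator hsetm).aestronglyMeasurable
  have hindle : ∀ p : ℝ × ℝ, |Set.indicator {q : ℝ × ℝ | q.2 ≤ G q.1} (1 : ℝ × ℝ → ℝ) p| ≤ 1 := by
    intro p
    by_cases hp : p ∈ {q : ℝ × ℝ | q.2 ≤ G q.1} <;> simp [Set.indicator, hp]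
  have hF_int : Integrable F
      ((volume.restrict (Ioc 0 s)).prod (volume.restrict (Ioc 0 B))) := by
    have hboundInt : Integrable (fun p : ℝ × ℝ => |g p.1| * |M|)
        ((volume.restrict (Ioc 0 s)).prod (volume.restrict (Ioc 0 B))) := by
      have hcst : Integrable (fun _ : ℝ => |M|) (volume.restrict (Ioc (0:ℝ) B)) :=
        integrableOn_const measure_Ioc_lt_top.ne
      exact Integrable.mul_prod (f := fun u => |g u|) (g := fun _ : ℝ => |M|)
        hg.abs.restrict hcst
    refine hboundInt.mono' hF_aesm ?_
    have hmem : ∀ᵐ p ∂((volume.restrict (Ioc 0 s)).prod (volume.restrict (Ioc 0 B))),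
        p ∈ (Ioc (0:ℝ) s) ×ˢ (Ioc (0:ℝ) B) := by
      rw [Measure.prod_restrict]
      exact ae_restrict_mem (measurableSet_Ioc.prod measurableSet_Ioc)
    filter_upwards [hmem] with p hp
    have h2 : |h'' p.2| ≤ M := hM p.2 ⟨hp.2.1.le, hp.2.2⟩
    calc ‖F p‖ = |g p.1 * h'' p.2| * |Set.indicator {q : ℝ × ℝ | q.2 ≤ G q.1} 1 p| := by
          rw [hFdef]; exact abs_mul _ _
      _ ≤ |g p.1 * h'' p.2| * 1 :=
          mul_le_mul_of_nonneg_left (hindle p) (abs_nonneg _)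
      _ = |g p.1| * |h'' p.2| := by rw [mul_one, abs_mul]
      _ ≤ |g p.1| * |M| :=
          mul_le_mul_of_nonneg_left (h2.trans (le_abs_self M)) (abs_nonneg _)
  -- pointwise identity on the first variable
  have hptwise : ∀ u ∈ Ioc (0:ℝ) s,
      g u * h' (G u) = g u * h' 0 + ∫ x in Ioc (0:ℝ) B, F (u, x) := by
    intro u hu
    have hGu0 : 0 ≤ G u := hGnn u hu.1.le
    have hGuB : G u ≤ B := hGleB u hu.2
    have hFx : (fun x => F (u, x)) =
        fun x => g u * (Set.indicator (Set.Iic (G u)) h'' x) := by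
      funext x
      simp only [hFdef, Set.indicator, Set.mem_setOf_eq, Set.mem_Iic]
      by_cases hx : x ≤ G u <;> simp [hx] <;> ring
    rw [hFx, integral_const_mul, setIntegral_indicator measurableSet_Iic]
    have hinter : Ioc (0:ℝ) B ∩ Iic (G u) = Ioc 0 (G u) := by
      rw [Set.Ioc_inter_Iic, min_eq_right hGuB]
    rw [hinter]
    have hFTC : ∫ x in (0:ℝ)..(G u), h'' x = h' (G u) - h' 0 :=
      intervalIntegral.integral_eq_sub_of_hasDerivAt (fun x _ => hd2 x)
        (hc2.intervalIntegrable _ _)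
    rw [← intervalIntegral.integral_of_le hGu0, hFTC]
    ring
  have hint1 : Integrable (fun u => g u * h' 0) (volume.restrict (Ioc 0 s)) :=
    hg.restrict.mul_const _
  have hint2 : Integrable (fun u => ∫ x in Ioc (0:ℝ) B, F (u, x))
      (volume.restrict (Ioc 0 s)) := hF_int.integral_prod_left
  have hLHS : ∫ u in (0:ℝ)..s, g u * h' (G u)
      = (∫ u in Ioc (0:ℝ) s, g u * h' 0)
        + ∫ u in Ioc (0:ℝ) s, (∫ x in Ioc (0:ℝ) B, F (u, x)) := by
    rw [intervalIntegral.integral_of_le hs,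
      setIntegral_congr_fun measurableSet_Ioc hptwise]
    exact integral_add hint1 hint2
  have hconst : ∫ u in Ioc (0:ℝ) s, g u * h' 0 = B * h' 0 := by
    have hB' : B = ∫ u in Ioc (0:ℝ) s, g u := by
      rw [hBdef, hGdef]
      exact intervalIntegral.integral_of_le hs
    rw [integral_mul_const, ← hB']
  have hswap : ∫ u in Ioc (0:ℝ) s, (∫ x in Ioc (0:ℝ) B, F (u, x))
      = ∫ x in Ioc (0:ℝ) B, (∫ u in Ioc (0:ℝ) s, F (u, x)) :=
    integral_integral_swap hF_int
  -- outer bound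
  have houter : ∫ x in Ioc (0:ℝ) B, (∫ u in Ioc (0:ℝ) s, F (u, x))
      ≤ ∫ x in Ioc (0:ℝ) B, h'' x * (B - x) := by
    have hi1 : IntegrableOn (fun x => ∫ u in Ioc (0:ℝ) s, F (u, x)) (Ioc 0 B) volume := by
      have := hF_int.swap.integral_prod_left
      exact this
    have hi2 : IntegrableOn (fun x => h'' x * (B - x)) (Ioc 0 B) volume :=
      (hc2.mul (continuous_const.sub continuous_id)).integrableOn_Ioc
    refine setIntegral_mono_on hi1 hi2 measurableSet_Ioc ?_
    intro x hx
    have hAmeas : MeasurableSet {u : ℝ | x ≤ G u} :=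
      (isClosed_le continuous_const hGcont).measurableSet
    have hRe : (fun u => F (u, x)) =
        fun u => h'' x * (Set.indicator {u : ℝ | x ≤ G u} g u) := by
      funext u
      simp only [hFdef, Set.indicator, Set.mem_setOf_eq]
      by_cases hc : x ≤ G u <;> simp [hc] <;> ring
    rw [hRe, integral_const_mul, setIntegral_indicator hAmeas]
    refine mul_le_mul_of_nonneg_left ?_ (hnn x hx.1.le hx.2)
    -- ∫ over D := Ioc 0 s ∩ {u | x ≤ G u} of g  ≤ B - x
    rcases (Ioc (0:ℝ) s ∩ {u : ℝ | x ≤ G u}).eq_empty_or_nonempty with hDe | hDne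
    · rw [hDe]
      simp only [Measure.restrict_empty, integral_zero_measure]
      linarith [hx.2]
    · set D := Ioc (0:ℝ) s ∩ {u : ℝ | x ≤ G u} with hDdef
      have hbdd : BddBelow D := ⟨0, fun u hu => hu.1.1.le⟩
      set v := sInf D with hvdef
      have hvD : ∀ u ∈ D, v ≤ u := fun u hu => csInf_le hbdd hu
      obtain ⟨w, hw⟩ := hDne
      have hvs : v ≤ s := le_trans (hvD w hw) hw.1.2
      have hGv : x ≤ G v := by
        have hcl : closure D ⊆ {u : ℝ | x ≤ G u} :=
          closure_minimal Set.inter_subset_right (isClosed_le continuous_const hGcont)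
        exact hcl (csInf_mem_closure ⟨w, hw⟩ hbdd)
      have hsub : ∫ u in D, g u ≤ ∫ u in Icc v s, g u := by
        refine setIntegral_mono_set hg.integrableOn
          (Filter.Eventually.of_forall fun u => hgnn u) ?_
        refine HasSubset.Subset.eventuallyLE ?_
        intro u hu
        exact ⟨hvD u hu, hu.1.2⟩
      have hIcc : ∫ u in Icc v s, g u = G s - G v := by
        rw [integral_Icc_eq_integral_Ioc, ← intervalIntegral.integral_of_le hvs]
        rw [← intervalIntegral.integral_interval_sub_left
          (hg.intervalIntegrable (a := 0) (b := s)) (hg.intervalIntegrable (a := 0) (b := v))]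
      rw [hIcc] at hsub
      have : G v ≥ x := hGv
      linarith
  -- final FTC computation
  have hfinal : ∫ x in Ioc (0:ℝ) B, h'' x * (B - x) = h B - h 0 - h' 0 * B := by
    have hk : ∀ x : ℝ, HasDerivAt (fun y => (B - y) * h' y + h y) (h'' x * (B - x)) x := by
      intro x
      have h1 : HasDerivAt (fun y : ℝ => B - y) (-1) x := by
        simpa using (hasDerivAt_id x).const_sub B
      have h2 := (h1.mul (hd2 x)).add (hd1 x)
      refine h2.congr_deriv ?_
      ring
    rw [← intervalIntegral.integral_of_le hB0]
    rw [intervalIntegral.integral_eq_sub_of_hasDerivAt (fun x _ => hk x)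
      ((hc2.mul (continuous_const.sub continuous_id)).intervalIntegrable _ _)]
    simp
    ring
  calc ∫ u in (0:ℝ)..s, g u * h' (G u)
      = (∫ u in Ioc (0:ℝ) s, g u * h' 0)
        + ∫ u in Ioc (0:ℝ) s, (∫ x in Ioc (0:ℝ) B, F (u, x)) := hLHS
    _ = B * h' 0 + ∫ x in Ioc (0:ℝ) B, (∫ u in Ioc (0:ℝ) s, F (u, x)) := by
        rw [hconst, hswap]
    _ ≤ B * h' 0 + ∫ x in Ioc (0:ℝ) B, h'' x * (B - x) := by linarith [houter]
    _ = h B - h 0 := by rw [hfinal]; ring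



noncomputable def hod (a x : ℝ) : ℝ := Real.exp (1 - a * Real.exp (-x))

lemma hod_pos (a x : ℝ) : 0 < hod a x := Real.exp_pos _

lemma log_hod (a x : ℝ) : Real.log (hod a x) = 1 - a * Real.exp (-x) := Real.log_exp _

lemma hod_cont (a : ℝ) : Continuous (hod a) :=
  Real.continuous_exp.comp (continuous_const.sub
    (continuous_const.mul (Real.continuous_exp.comp continuous_neg)))

lemma exp_neg_hasDerivAt (x : ℝ) :
    HasDerivAt (fun x : ℝ => Real.exp (-x)) (-Real.exp (-x)) x := by
  simpa [Function.comp_def] using (Real.hasDerivAt_exp (-x)).comp x ((hasDerivAt_id x).neg)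

lemma hod_deriv (a x : ℝ) : HasDerivAt (hod a) (a * Real.exp (-x) * hod a x) x := by
  have hinner : HasDerivAt (fun x : ℝ => 1 - a * Real.exp (-x)) (a * Real.exp (-x)) x := by
    have := ((exp_neg_hasDerivAt x).const_mul a).const_sub 1
    refine this.congr_deriv ?_
    ring
  have h := (Real.hasDerivAt_exp (1 - a * Real.exp (-x))).comp x hinner
  have h2 : a * Real.exp (-x) * hod a x
      = Real.exp (1 - a * Real.exp (-x)) * (a * Real.exp (-x)) := by
    unfold hod; ring
  rw [h2]
  exact h

lemma hod_deriv2 (a x : ℝ) :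
    HasDerivAt (fun x => a * Real.exp (-x) * hod a x)
      (a * Real.exp (-x) * hod a x * (a * Real.exp (-x) - 1)) x := by
  have h1 : HasDerivAt (fun x : ℝ => a * Real.exp (-x)) (-(a * Real.exp (-x))) x := by
    have := (exp_neg_hasDerivAt x).const_mul a
    refine this.congr_deriv ?_
    ring
  have h2 := h1.mul (hod_deriv a x)
  refine h2.congr_deriv ?_
  ring

lemma hod_cont2 (a : ℝ) :
    Continuous (fun x => a * Real.exp (-x) * hod a x * (a * Real.exp (-x) - 1)) := by
  have h1 : Continuous fun x : ℝ => a * Real.exp (-x) :=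
    continuous_const.mul (Real.continuous_exp.comp continuous_neg)
  exact (h1.mul (hod_cont a)).mul (h1.sub continuous_const)

set_option maxHeartbeats 3200000 in
theorem log_gronwall_estimate
    (T C : ℝ) (W V : ℝ → ℝ)
    (hT : 0 < T) (hC : 0 < C)
    (hWcont : ContinuousOn W (Set.Icc 0 T))
    (hWrange : ∀ t ∈ Set.Icc (0:ℝ) T, 0 < W t ∧ W t ≤ 1)
    (hVnonneg : ∀ t ∈ Set.Icc (0:ℝ) T, 0 ≤ V t)
    (hVint : IntegrableOn V (Set.Icc 0 T))
    (hineq : ∀ t ∈ Set.Icc (0:ℝ) T,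
      W t ≤ W 0 + C * ∫ τ in (0:ℝ)..t,
        V τ * Real.log (Real.exp 1 + V τ) * (W τ * (1 - Real.log (W τ)))) :
    ∀ t ∈ Set.Icc (0:ℝ) T,
      W t / Real.exp 1 ≤
        (W 0 / Real.exp 1) ^
          (Real.exp (-C * ∫ τ in (0:ℝ)..t, V τ * Real.log (Real.exp 1 + V τ))) := by
  intro t ht
  obtain ⟨ht0, htT⟩ := ht
  have h0T : (0:ℝ) ∈ Set.Icc (0:ℝ) T := ⟨le_refl 0, hT.le⟩
  have hW0pos : 0 < W 0 := (hWrange 0 h0T).1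
  have hW0le : W 0 ≤ 1 := (hWrange 0 h0T).2
  have htIcc : t ∈ Set.Icc (0:ℝ) T := ⟨ht0, htT⟩
  have hWtpos : 0 < W t := (hWrange t htIcc).1
  have hWtle : W t ≤ 1 := (hWrange t htIcc).2
  set Vlog : ℝ → ℝ := fun u => V u * Real.log (Real.exp 1 + V u) with hVlogdef
  set μW : ℝ → ℝ := fun u => W u * (1 - Real.log (W u)) with hμWdef
  have hone_le_e : (1:ℝ) ≤ Real.exp 1 := by
    have := Real.add_one_le_exp (1:ℝ); linarith
  have hVlognn : ∀ u ∈ Set.Icc (0:ℝ) T, 0 ≤ Vlog u := by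
    intro u hu
    exact mul_nonneg (hVnonneg u hu) (Real.log_nonneg (by linarith [hVnonneg u hu]))
  have hμWpos : ∀ u ∈ Set.Icc (0:ℝ) T, 0 < μW u := by
    intro u hu
    have h1 := (hWrange u hu).1
    have h2 := Real.log_nonpos (hWrange u hu).1.le (hWrange u hu).2
    exact mul_pos h1 (by linarith)
  have hμWle1 : ∀ u ∈ Set.Icc (0:ℝ) T, μW u ≤ 1 := fun u hu =>
    mu_le_one (hWrange u hu).1 (hWrange u hu).2
  have hμWcontOn : ContinuousOn μW (Set.Icc 0 T) := by
    rw [hμWdef]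
    exact hWcont.mul (continuousOn_const.sub
      (hWcont.log (fun u hu => ne_of_gt (hWrange u hu).1)))
  by_cases hi : IntegrableOn Vlog (Set.Icc 0 t) volume
  · -- main case: Vlog integrable on [0, t]
    set gext : ℝ → ℝ := (Set.Icc (0:ℝ) t).indicator (fun u => C * Vlog u) with hgextdef
    have hgext_eq : ∀ u ∈ Set.Icc (0:ℝ) t, gext u = C * Vlog u := fun u hu => by
      rw [hgextdef]; exact Set.indicator_of_mem hu _
    have hgext_int : Integrable gext :=
      (integrable_indicator_iff measurableSet_Icc).mpr (hi.const_mul C)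
    have hgextnn : ∀ u, 0 ≤ gext u := by
      intro u
      apply Set.indicator_nonneg
      intro v hv
      exact mul_nonneg hC.le (hVlognn v ⟨hv.1, hv.2.trans htT⟩)
    set G : ℝ → ℝ := fun u => ∫ τ in (0:ℝ)..u, gext τ with hGdef
    have hGcont : Continuous G :=
      intervalIntegral.continuous_primitive (fun a b => hgext_int.intervalIntegrable) 0
    have hGmono : Monotone G := by
      intro u v huv
      have hadd := intervalIntegral.integral_add_adjacent_intervals
        (hgext_int.intervalIntegrable (a := 0) (b := u))
        (hgext_int.intervalIntegrable (a := u) (b := v))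
      have hnn2 : 0 ≤ ∫ τ in u..v, gext τ :=
        intervalIntegral.integral_nonneg huv (fun x _ => hgextnn x)
      simp only [hGdef]
      linarith [hadd]
    have hG0 : G 0 = 0 := intervalIntegral.integral_same
    have hGnn : ∀ u, 0 ≤ u → 0 ≤ G u := by
      intro u hu; have := hGmono hu; rw [hG0] at this; exact this
    have hGt0 : 0 ≤ G t := hGnn t ht0
    have hGteq : G t = C * ∫ τ in (0:ℝ)..t, Vlog τ := by
      have h1 : Set.EqOn gext (fun u => C * Vlog u) (Set.uIcc (0:ℝ) t) := by
        intro u hu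
        rw [Set.uIcc_of_le ht0] at hu
        exact hgext_eq u hu
      calc G t = ∫ τ in (0:ℝ)..t, C * Vlog τ := intervalIntegral.integral_congr h1
        _ = C * ∫ τ in (0:ℝ)..t, Vlog τ := intervalIntegral.integral_const_mul _ _
    -- key estimate
    have hkey : Real.exp (-(G t)) * (1 - Real.log (W 0)) ≤ 1 - Real.log (W t) := by
      apply le_of_forall_pos_le_add
      intro ε' hε'
      set ε := min (1/2) ε' with hεdef
      have hε0 : 0 < ε := lt_min (by norm_num) hε'
      have hεlt1 : ε < 1 := lt_of_le_of_lt (min_le_left _ _) (by norm_num)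
      have hεle : ε ≤ ε' := min_le_right _ _
      suffices hsuff : Real.exp (-(G t)) * (1 - Real.log (W 0) - ε) ≤ 1 - Real.log (W t) by
        have hE1 : Real.exp (-(G t)) ≤ 1 := by
          have := Real.exp_le_exp.mpr (neg_nonpos.mpr hGt0)
          rwa [Real.exp_zero] at this
        have hEε : Real.exp (-(G t)) * ε ≤ ε' :=
          le_trans (mul_le_of_le_one_left hε0.le hE1) hεle
        have hring : Real.exp (-(G t)) * (1 - Real.log (W 0))
            = Real.exp (-(G t)) * (1 - Real.log (W 0) - ε) + Real.exp (-(G t)) * ε := by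
          ring
        linarith
      set a := 1 - Real.log (W 0) - ε with hadef
      have hlogW0 : Real.log (W 0) ≤ 0 := Real.log_nonpos hW0pos.le hW0le
      have ha : 0 < a := by rw [hadef]; linarith
      have hgoal_eq : Real.exp (-(G t)) * (1 - Real.log (W 0) - ε)
          = a * Real.exp (-(G t)) := by rw [hadef]; ring
      rw [hgoal_eq]
      by_cases hB : a * Real.exp (-(G t)) ≤ 1
      · have hlogWt : Real.log (W t) ≤ 0 := Real.log_nonpos hWtpos.le hWtle
        linarith
      · push_neg at hB
        have hφlt1 : ∀ s ∈ Set.Icc (0:ℝ) t, 1 < a * Real.exp (-(G s)) := by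
          intro s hs
          have h1 : G s ≤ G t := hGmono hs.2
          have h2 : Real.exp (-(G t)) ≤ Real.exp (-(G s)) :=
            Real.exp_le_exp.mpr (by linarith)
          nlinarith
        have hkeyint : ∀ s ∈ Set.Icc (0:ℝ) t,
            (∫ u in (0:ℝ)..s, gext u * (a * Real.exp (-(G u)) * hod a (G u)))
              ≤ hod a (G s) - hod a 0 := by
          intro s hs
          have hnn : ∀ x, 0 ≤ x → x ≤ (∫ u in (0:ℝ)..s, gext u) →
              0 ≤ a * Real.exp (-x) * hod a x * (a * Real.exp (-x) - 1) := by
            intro x hx0 hxle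
            have hGsle : G s ≤ G t := hGmono hs.2
            have hxle' : x ≤ G t := le_trans hxle hGsle
            have h1 : Real.exp (-(G t)) ≤ Real.exp (-x) :=
              Real.exp_le_exp.mpr (by linarith)
            have h2 : 1 ≤ a * Real.exp (-x) := by nlinarith
            have h3 : 0 < a * Real.exp (-x) := by positivity
            exact mul_nonneg (mul_nonneg h3.le (hod_pos a x).le) (by linarith)
          exact key_bound gext s hs.1 hgext_int hgextnn (hod a)
            (fun x => a * Real.exp (-x) * hod a x)
            (fun x => a * Real.exp (-x) * hod a x * (a * Real.exp (-x) - 1))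
            (hod_deriv a) (hod_deriv2 a) (hod_cont2 a) hnn
        have hφ0 : hod a 0 = W 0 * Real.exp ε := by
          have h1 : (1 : ℝ) - a * Real.exp (-(0:ℝ)) = Real.log (W 0) + ε := by
            rw [neg_zero, Real.exp_zero, hadef]; ring
          unfold hod
          rw [h1, Real.exp_add, Real.exp_log hW0pos]
        have hexpε : 1 < Real.exp ε := by
          rw [← Real.exp_zero]
          exact Real.exp_lt_exp.mpr hε0
        -- bootstrap comparison
        have hmain : ∀ s ∈ Set.Icc (0:ℝ) t, W s < hod a (G s) := by
          by_contra hcon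
          push_neg at hcon
          obtain ⟨sbad, hsbad, hbad⟩ := hcon
          set S := {s : ℝ | s ∈ Set.Icc (0:ℝ) t ∧ hod a (G s) ≤ W s} with hSdef
          have hSne : S.Nonempty := ⟨sbad, hsbad, hbad⟩
          have hSbdd : BddBelow S := ⟨0, fun u hu => hu.1.1⟩
          have hSclosed : IsClosed S := by
            have hrw : S = Set.Icc 0 t ∩ (fun s => W s - hod a (G s)) ⁻¹' (Set.Ici 0) := by
              ext u
              simp only [hSdef, Set.mem_setOf_eq, Set.mem_inter_iff, Set.mem_preimage,
                Set.mem_Ici, sub_nonneg]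
            rw [hrw]
            exact ContinuousOn.preimage_isClosed_of_isClosed
              ((hWcont.mono (Set.Icc_subset_Icc le_rfl htT)).sub
                (((hod_cont a).comp hGcont).continuousOn)) isClosed_Icc isClosed_Ici
          set s₀ := sInf S with hs₀def
          have hs₀S : s₀ ∈ S := hSclosed.csInf_mem hSne hSbdd
          obtain ⟨hs₀I, hs₀W⟩ := hs₀S
          have hlt : ∀ u, 0 ≤ u → u < s₀ → W u < hod a (G u) := by
            intro u hu0 hus
            by_contra hge
            push_neg at hge
            have huS : u ∈ S := ⟨⟨hu0, le_trans hus.le hs₀I.2⟩, hge⟩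
            exact absurd (csInf_le hSbdd huS) (not_le.mpr hus)
          have hs₀T : s₀ ∈ Set.Icc (0:ℝ) T := ⟨hs₀I.1, hs₀I.2.trans htT⟩
          have h1 : W s₀ ≤ W 0 + C * ∫ τ in (0:ℝ)..s₀, Vlog τ * μW τ :=
            hineq s₀ hs₀T
          have h2 : C * (∫ τ in (0:ℝ)..s₀, Vlog τ * μW τ)
              = ∫ u in Set.Ioc (0:ℝ) s₀, gext u * μW u := by
            rw [← intervalIntegral.integral_const_mul]
            rw [intervalIntegral.integral_congr (g := fun u => gext u * μW u)
              (fun u hu => by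
                rw [Set.uIcc_of_le hs₀I.1] at hu
                have hmem : u ∈ Set.Icc (0:ℝ) t := ⟨hu.1, hu.2.trans hs₀I.2⟩
                show C * (Vlog u * μW u) = gext u * μW u
                rw [hgext_eq u hmem]; ring)]
            exact intervalIntegral.integral_of_le hs₀I.1
          have haesmW : AEStronglyMeasurable μW (volume.restrict (Set.Ioc 0 s₀)) :=
            (hμWcontOn.aestronglyMeasurable measurableSet_Icc).mono_measure
              (Measure.restrict_mono
                (show Set.Ioc (0:ℝ) s₀ ⊆ Set.Icc (0:ℝ) T from
                  fun u hu => ⟨hu.1.le, hu.2.trans (hs₀I.2.trans htT)⟩) le_rfl)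
          have hintW : IntegrableOn (fun u => gext u * μW u) (Set.Ioc 0 s₀) volume := by
            refine Integrable.mono' hgext_int.restrict
              ((hgext_int.restrict.aestronglyMeasurable).mul haesmW) ?_
            filter_upwards [ae_restrict_mem measurableSet_Ioc] with u hu
            have huT : u ∈ Set.Icc (0:ℝ) T := ⟨hu.1.le, hu.2.trans (hs₀I.2.trans htT)⟩
            rw [Real.norm_eq_abs,
              abs_of_nonneg (mul_nonneg (hgextnn u) (hμWpos u huT).le)]
            calc gext u * μW u ≤ gext u * 1 :=
                  mul_le_mul_of_nonneg_left (hμWle1 u huT) (hgextnn u)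
              _ = gext u := mul_one _
          have hφ'cont : Continuous (fun u => a * Real.exp (-(G u)) * hod a (G u)) :=
            (continuous_const.mul (Real.continuous_exp.comp hGcont.neg)).mul
              ((hod_cont a).comp hGcont)
          have hintφ : IntegrableOn
              (fun u => gext u * (a * Real.exp (-(G u)) * hod a (G u)))
              (Set.Ioc 0 s₀) volume := by
            refine Integrable.mono' ((hgext_int.const_mul (a * Real.exp 1)).restrict)
              ((hgext_int.restrict.aestronglyMeasurable).mul
                hφ'cont.aestronglyMeasurable.restrict) ?_
            filter_upwards [ae_restrict_mem measurableSet_Ioc] with u hu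
            have hGu0 : 0 ≤ G u := hGnn u hu.1.le
            have he1 : Real.exp (-(G u)) ≤ 1 := by
              have := Real.exp_le_exp.mpr (neg_nonpos.mpr hGu0)
              rwa [Real.exp_zero] at this
            have he2 : hod a (G u) ≤ Real.exp 1 := by
              apply Real.exp_le_exp.mpr
              nlinarith [Real.exp_pos (-(G u))]
            have hφ'nn : 0 ≤ a * Real.exp (-(G u)) * hod a (G u) :=
              mul_nonneg (mul_nonneg ha.le (Real.exp_pos _).le) (hod_pos _ _).le
            rw [Real.norm_eq_abs, abs_of_nonneg (mul_nonneg (hgextnn u) hφ'nn)]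
            have : a * Real.exp (-(G u)) * hod a (G u) ≤ a * Real.exp 1 := by
              have hmm := mul_le_mul (mul_le_mul_of_nonneg_left he1 ha.le) he2
                (hod_pos a (G u)).le (mul_nonneg ha.le zero_le_one)
              have hone : a * 1 * Real.exp 1 = a * Real.exp 1 := by ring
              linarith
            calc gext u * (a * Real.exp (-(G u)) * hod a (G u))
                ≤ gext u * (a * Real.exp 1) :=
                  mul_le_mul_of_nonneg_left this (hgextnn u)
              _ = a * Real.exp 1 * gext u := by ring
          have hmono2 : ∫ u in Set.Ioc (0:ℝ) s₀, gext u * μW u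
              ≤ ∫ u in Set.Ioc (0:ℝ) s₀, gext u * (a * Real.exp (-(G u)) * hod a (G u)) := by
            refine integral_mono_ae hintW hintφ ?_
            have hnes : ∀ᵐ u ∂(volume.restrict (Set.Ioc (0:ℝ) s₀)), u ≠ s₀ := by
              refine Filter.Eventually.filter_mono (ae_mono Measure.restrict_le_self) ?_
              rw [ae_iff]
              simpa using measure_singleton s₀
            filter_upwards [ae_restrict_mem measurableSet_Ioc, hnes] with u hu hune
            have hus₀ : u < s₀ := lt_of_le_of_ne hu.2 hune
            have huIccT : u ∈ Set.Icc (0:ℝ) T := ⟨hu.1.le, hu.2.trans (hs₀I.2.trans htT)⟩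
            have huIcct : u ∈ Set.Icc (0:ℝ) t := ⟨hu.1.le, le_trans hu.2 hs₀I.2⟩
            have hWu : W u < hod a (G u) := hlt u hu.1.le hus₀
            have hφle1 : hod a (G u) ≤ 1 := by
              have hl := hφlt1 u huIcct
              calc hod a (G u) = Real.exp (1 - a * Real.exp (-(G u))) := rfl
                _ ≤ Real.exp 0 := Real.exp_le_exp.mpr (by linarith)
                _ = 1 := Real.exp_zero
            have hmu := mu_mono (hWrange u huIccT).1 hWu.le hφle1
            have hid : hod a (G u) * (1 - Real.log (hod a (G u)))
                = a * Real.exp (-(G u)) * hod a (G u) := by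
              rw [log_hod]; ring
            have hfin : μW u ≤ a * Real.exp (-(G u)) * hod a (G u) := by
              rw [← hid]; exact hmu
            exact mul_le_mul_of_nonneg_left hfin (hgextnn u)
          have h3 : ∫ u in Set.Ioc (0:ℝ) s₀, gext u * (a * Real.exp (-(G u)) * hod a (G u))
              ≤ hod a (G s₀) - hod a 0 := by
            rw [← intervalIntegral.integral_of_le hs₀I.1]
            exact hkeyint s₀ hs₀I
          have hcontr : W s₀ < hod a (G s₀) := by
            have hstep : W s₀ ≤ W 0 + (hod a (G s₀) - hod a 0) := by
              rw [h2] at h1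
              linarith
            rw [hφ0] at hstep
            nlinarith
          exact absurd hs₀W (not_le.mpr hcontr)
        have hWtφ : W t < hod a (G t) := hmain t ⟨ht0, le_rfl⟩
        have hloglt : Real.log (W t) < 1 - a * Real.exp (-(G t)) := by
          have := Real.log_lt_log hWtpos hWtφ
          rwa [log_hod] at this
        linarith
    -- conclude from hkey
    have hW0e : 0 < W 0 / Real.exp 1 := div_pos hW0pos (Real.exp_pos 1)
    have hWte : 0 < W t / Real.exp 1 := div_pos hWtpos (Real.exp_pos 1)
    have hEeq : (-C * ∫ τ in (0:ℝ)..t, Vlog τ) = -(G t) := by rw [hGteq]; ring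
    rw [Real.rpow_def_of_pos hW0e, ← Real.exp_log hWte, hEeq]
    apply Real.exp_le_exp.mpr
    rw [Real.log_div (ne_of_gt hWtpos) (Real.exp_ne_zero 1),
      Real.log_div (ne_of_gt hW0pos) (Real.exp_ne_zero 1), Real.log_exp]
    have hring : (Real.log (W 0) - 1) * Real.exp (-(G t))
        = -(Real.exp (-(G t)) * (1 - Real.log (W 0))) := by ring
    linarith
  · -- degenerate case: Vlog not integrable on [0, t]
    have hne : (Set.Icc (0:ℝ) T).Nonempty := ⟨0, h0T⟩
    obtain ⟨u₀, hu₀, hminon⟩ := isCompact_Icc.exists_isMinOn hne hμWcontOn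
    have hm : 0 < μW u₀ := hμWpos u₀ hu₀
    have hII : ¬ IntervalIntegrable Vlog volume 0 t := by
      intro hcon
      exact hi ((integrableOn_Icc_iff_integrableOn_Ioc).mpr
        ((intervalIntegrable_iff_integrableOn_Ioc_of_le ht0).mp hcon))
    have hII2 : ¬ IntervalIntegrable (fun τ => Vlog τ * μW τ) volume 0 t := by
      intro hcon
      apply hII
      rw [intervalIntegrable_iff_integrableOn_Ioc_of_le ht0] at hcon ⊢
      have hVaesm : AEStronglyMeasurable V (volume.restrict (Set.Ioc 0 t)) :=
        hVint.aestronglyMeasurable.mono_measure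
          (Measure.restrict_mono (show Set.Ioc (0:ℝ) t ⊆ Set.Icc (0:ℝ) T from
            fun u hu => ⟨hu.1.le, hu.2.trans htT⟩) le_rfl)
      have haesm : AEStronglyMeasurable Vlog (volume.restrict (Set.Ioc 0 t)) := by
        rw [hVlogdef]
        exact (hVaesm.aemeasurable.mul
          ((Real.measurable_log.comp_aemeasurable
            (aemeasurable_const.add hVaesm.aemeasurable)))).aestronglyMeasurable
      refine Integrable.mono' (hcon.abs.const_mul (1 / μW u₀)) haesm ?_
      filter_upwards [ae_restrict_mem measurableSet_Ioc] with u hu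
      have huT : u ∈ Set.Icc (0:ℝ) T := ⟨hu.1.le, hu.2.trans htT⟩
      have h1 : 0 ≤ Vlog u := hVlognn u huT
      have h2 : μW u₀ ≤ μW u := isMinOn_iff.mp hminon u huT
      have h3 : 0 < μW u := hμWpos u huT
      rw [Real.norm_eq_abs, abs_of_nonneg h1]
      have hstep : Vlog u * μW u₀ ≤ Vlog u * μW u := mul_le_mul_of_nonneg_left h2 h1
      have habs : Vlog u * μW u ≤ |Vlog u * μW u| := le_abs_self _
      calc Vlog u = (1 / μW u₀) * (Vlog u * μW u₀) := by field_simp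
        _ ≤ (1 / μW u₀) * |Vlog u * μW u| := by
            apply mul_le_mul_of_nonneg_left (by linarith) (by positivity)
    have hz1 : (∫ τ in (0:ℝ)..t, Vlog τ * μW τ) = 0 :=
      intervalIntegral.integral_undef hII2
    have hz2 : (∫ τ in (0:ℝ)..t, Vlog τ) = 0 :=
      intervalIntegral.integral_undef hII
    have hWt : W t ≤ W 0 := by
      have h1 : W t ≤ W 0 + C * ∫ τ in (0:ℝ)..t, Vlog τ * μW τ := hineq t htIcc
      rw [hz1] at h1
      linarith
    have hgoal : (∫ τ in (0:ℝ)..t, V τ * Real.log (Real.exp 1 + V τ)) = 0 := hz2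
    rw [hgoal]
    simp only [mul_zero, neg_zero, Real.exp_zero, Real.rpow_one]
    gcongr
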